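/- Suppose u(0),...,u(T-1) is a real sequence with T ≥ 2K-1 such that (i) the depth-K Hankel matrix of u(0),...,u(T-1) has rank K, and (ii) the rank of the depth-K Hankel matrix of u(0),...,u(T-2) equals the rank of the depth-(K+1) Hankel matrix of u(0),...,u(T-1). Then there exist a K×K matrix S_g, a 1×K row vector L_g, and w_0 ∈ ℝ^K with (L_g,S_g) observable and (S_g,w_0) controllable such that u(t) = L_g S_g^t w_0 for all 0 ≤ t ≤ T-1. -/

import Mathlib

open Matrix

namespace Stmt3Aux
open Finset Polynomial

variable {K : ℕ} (a : Fin K → ℝ)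

def compS (K : ℕ) (a : Fin K → ℝ) : Matrix (Fin K) (Fin K) ℝ :=
  Matrix.of fun i j => if (i : ℕ) + 1 = K then a j else if (j : ℕ) = (i : ℕ) + 1 then 1 else 0

lemma compS_mulVec_lt (i : Fin K) (h : (i : ℕ) + 1 < K) (w : Fin K → ℝ) :
    (compS K a *ᵥ w) i = w ⟨(i : ℕ) + 1, h⟩ := by
  have hne : (i : ℕ) + 1 ≠ K := Nat.ne_of_lt h
  simp only [compS, Matrix.mulVec, dotProduct, Matrix.of_apply, if_neg hne]
  rw [Finset.sum_eq_single (⟨(i : ℕ) + 1, h⟩ : Fin K)]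
  · simp
  · intro b _ hb
    rw [if_neg, zero_mul]
    intro hbv
    exact hb (Fin.ext hbv)
  · simp

lemma compS_mulVec_last (i : Fin K) (h : (i : ℕ) + 1 = K) (w : Fin K → ℝ) :
    (compS K a *ᵥ w) i = ∑ j, a j * w j := by
  simp [compS, Matrix.mulVec, dotProduct, h]

variable {u : ℕ → ℝ} {N : ℕ}

lemma compS_step (hrec : ∀ j < N, u (K + j) = ∑ i, a i * u ((i : ℕ) + j))
    (t : ℕ) (ht : t < N) :
    compS K a *ᵥ (fun i : Fin K => u (t + i)) = fun i : Fin K => u (t + 1 + i) := by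
  funext i
  rcases lt_or_eq_of_le (Nat.succ_le_of_lt i.isLt) with h | h
  · rw [compS_mulVec_lt a i h]
    simp only [Fin.val_mk]
    congr 1; omega
  · rw [compS_mulVec_last a i h]
    have := hrec t ht
    have h2 : t + 1 + (i : ℕ) = K + t := by omega
    rw [h2, this]
    apply Finset.sum_congr rfl
    intro j _
    congr 2
    omega

lemma compS_pow (hrec : ∀ j < N, u (K + j) = ∑ i, a i * u ((i : ℕ) + j))
    (t : ℕ) (ht : t ≤ N) :
    (compS K a) ^ t *ᵥ (fun i : Fin K => u (i : ℕ)) = fun i : Fin K => u (t + i) := by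
  induction t with
  | zero => simp
  | succ n ih =>
    rw [pow_succ', ← Matrix.mulVec_mulVec, ih (by omega),
      compS_step a hrec n (by omega)]

def Lrow (K : ℕ) : Matrix (Fin 1) (Fin K) ℝ :=
  Matrix.of fun _ j => if (j : ℕ) = 0 then 1 else 0

lemma Lrow_pick (i : ℕ) (h : i < K) (w : Fin K → ℝ) :
    ((Lrow K * (compS K a) ^ i) *ᵥ w) 0 = w ⟨i, h⟩ := by
  induction i generalizing w with
  | zero =>
    rw [pow_zero, Matrix.mul_one]
    simp only [Lrow, Matrix.mulVec, dotProduct, Matrix.of_apply]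
    rw [Finset.sum_eq_single (⟨0, h⟩ : Fin K)]
    · simp
    · intro b _ hb
      rw [if_neg, zero_mul]
      intro hbv; exact hb (Fin.ext hbv)
    · simp
  | succ n ih =>
    rw [pow_succ, ← Matrix.mul_assoc, ← Matrix.mulVec_mulVec,
      ih (by omega)]
    exact compS_mulVec_lt a ⟨n, by omega⟩ h w

lemma sum_mulVec' {ι : Type*} (s : Finset ι) (M : ι → Matrix (Fin K) (Fin K) ℝ)
    (w : Fin K → ℝ) : (∑ i ∈ s, M i) *ᵥ w = ∑ i ∈ s, M i *ᵥ w := by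
  ext j
  simp [Matrix.mulVec, dotProduct, Finset.sum_apply, Finset.sum_mul, Matrix.sum_apply]
  rw [Finset.sum_comm]

lemma pow_mulVec_mem (S : Matrix (Fin K) (Fin K) ℝ) (w : Fin K → ℝ) (m : ℕ) :
    S ^ m *ᵥ w ∈ Submodule.span ℝ (Set.range fun j : Fin K => S ^ (j : ℕ) *ᵥ w) := by
  induction m using Nat.strong_induction_on with
  | _ m ih =>
    by_cases hm : m < K
    · exact Submodule.subset_span ⟨⟨m, hm⟩, rfl⟩
    · push_neg at hm
      have hmono := S.charpoly_monic
      have hdeg : S.charpoly.natDegree = K := by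
        simpa using S.charpoly_natDegree_eq_dim
      have h0 : (Polynomial.aeval S) S.charpoly = 0 := S.aeval_self_charpoly
      rw [Polynomial.aeval_eq_sum_range, hdeg, Finset.sum_range_succ] at h0
      have hco : S.charpoly.coeff K = 1 := by
        have := hmono.coeff_natDegree
        rwa [hdeg] at this
      rw [hco, one_smul] at h0
      have h1 : S ^ K = -(∑ x ∈ Finset.range K, S.charpoly.coeff x • S ^ x) :=
        eq_neg_of_add_eq_zero_right h0
      have hCH : S ^ K = ∑ i ∈ Finset.range K, (-(S.charpoly.coeff i)) • S ^ i := by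
        rw [h1, ← Finset.sum_neg_distrib]
        exact Finset.sum_congr rfl fun i _ => (neg_smul _ _).symm
      have hSm : S ^ m = ∑ i ∈ Finset.range K,
          (-(S.charpoly.coeff i)) • S ^ (m - K + i) := by
        calc S ^ m = S ^ (m - K) * S ^ K := by rw [← pow_add]; congr 1; omega
          _ = ∑ i ∈ Finset.range K, (-(S.charpoly.coeff i)) • (S ^ (m - K) * S ^ i) := by
              rw [hCH, Finset.mul_sum]
              exact Finset.sum_congr rfl fun i _ => Matrix.mul_smul _ _ _
          _ = _ := Finset.sum_congr rfl fun i _ => by rw [← pow_add]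
      rw [hSm, sum_mulVec']
      refine Submodule.sum_mem _ fun i hi => ?_
      rw [Matrix.smul_mulVec]
      refine Submodule.smul_mem _ _ (ih (m - K + i) ?_)
      have := Finset.mem_range.mp hi
      omega

end Stmt3Aux

open Stmt3Aux

/-- a sequence whose depth-K Hankel matrix has rank K, and whose
depth-K Hankel matrix of the first T-1 samples has the same rank as the
depth-(K+1) Hankel matrix of all T samples, is the response of a K-dimensional
observable and reachable signal generator. -/
theorem stmt_3 (K T : ℕ) (hK : 1 ≤ K) (hT : 2 * K - 1 ≤ T) (u : ℕ → ℝ)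
    (h1 : (Matrix.of fun (i : Fin K) (j : Fin (T - K + 1)) => u ((i : ℕ) + (j : ℕ))).rank = K)
    (h2 : (Matrix.of fun (i : Fin K) (j : Fin (T - K)) => u ((i : ℕ) + (j : ℕ))).rank =
          (Matrix.of fun (i : Fin (K + 1)) (j : Fin (T - K)) => u ((i : ℕ) + (j : ℕ))).rank) :
    ∃ (Sg : Matrix (Fin K) (Fin K) ℝ) (Lg : Matrix (Fin 1) (Fin K) ℝ) (w0 : Fin K → ℝ),
      IsUnit (Matrix.of fun (i : Fin K) (j : Fin K) => (Lg * Sg ^ (i : ℕ)) 0 j) ∧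
      IsUnit (Matrix.of fun (i : Fin K) (j : Fin K) => ((Sg ^ (j : ℕ)) *ᵥ w0) i) ∧
      ∀ t : ℕ, t ≤ T - 1 → u t = ((Lg * Sg ^ t) *ᵥ w0) 0 := by
  classical
  set N := T - K with hN
  -- Step 1: extract the linear recurrence from h2
  set A : Matrix (Fin K) (Fin N) ℝ :=
    Matrix.of fun i j => u ((i : ℕ) + (j : ℕ)) with hA
  set B : Matrix (Fin (K + 1)) (Fin N) ℝ :=
    Matrix.of fun i j => u ((i : ℕ) + (j : ℕ)) with hB
  have hsub : Set.range A ⊆ Set.range B := by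
    rintro x ⟨i, rfl⟩
    refine ⟨⟨(i : ℕ), by omega⟩, ?_⟩
    funext j
    simp [hA, hB]
  have hle : Submodule.span ℝ (Set.range A) ≤ Submodule.span ℝ (Set.range B) :=
    Submodule.span_mono hsub
  have hspan_eq : Submodule.span ℝ (Set.range A) = Submodule.span ℝ (Set.range B) := by
    apply Submodule.eq_of_le_of_finrank_eq hle
    exact (Matrix.rank_eq_finrank_span_row A).symm.trans (h2.trans (Matrix.rank_eq_finrank_span_row B))
  have hmem : B ⟨K, by omega⟩ ∈ Submodule.span ℝ (Set.range A) := by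
    rw [hspan_eq]
    exact Submodule.subset_span ⟨⟨K, by omega⟩, rfl⟩
  replace hmem := (Submodule.mem_span_range_iff_exists_fun ℝ).mp hmem
  obtain ⟨a, ha⟩ := hmem
  have hrec : ∀ j < N, u (K + j) = ∑ i, a i * u ((i : ℕ) + j) := by
    intro j hj
    have := congrFun ha ⟨j, hj⟩
    simp only [Finset.sum_apply, Pi.smul_apply, smul_eq_mul, hA, hB,
      Matrix.of_apply] at this
    exact this.symm
  -- the generator
  refine ⟨compS K a, Lrow K, fun i : Fin K => u (i : ℕ), ?_, ?_, ?_⟩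
  · -- observability
    have : (Matrix.of fun (i : Fin K) (j : Fin K) =>
        (Lrow K * compS K a ^ (i : ℕ)) 0 j) = (1 : Matrix (Fin K) (Fin K) ℝ) := by
      ext i j
      have hp := Lrow_pick a (i : ℕ) i.isLt (Pi.single j 1)
      simp only [Matrix.mulVec_single_one, Matrix.col_apply, mul_one] at hp
      simp only [Matrix.of_apply, Matrix.one_apply, hp, Fin.eta, Pi.single_apply]
    rw [this]
    exact isUnit_one
  · -- controllability
    set w0 : Fin K → ℝ := fun i : Fin K => u (i : ℕ) with hw0
    set C : Matrix (Fin K) (Fin K) ℝ :=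
      Matrix.of fun i j => ((compS K a ^ (j : ℕ)) *ᵥ w0) i with hC
    set V := Submodule.span ℝ (Set.range fun j : Fin K => compS K a ^ (j : ℕ) *ᵥ w0)
      with hV
    have hVtop : V = ⊤ := by
      set H : Matrix (Fin K) (Fin (T - K + 1)) ℝ :=
        Matrix.of fun i j => u ((i : ℕ) + (j : ℕ)) with hH
      have hHle : Submodule.span ℝ (Set.range Hᵀ) ≤ V := by
        rw [Submodule.span_le]
        rintro x ⟨j, rfl⟩
        have hjN : (j : ℕ) ≤ N := by have := j.isLt; omega
        have hcol : Hᵀ j = compS K a ^ (j : ℕ) *ᵥ w0 := by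
          rw [compS_pow a hrec (j : ℕ) hjN]
          funext i
          simp [hH, Matrix.transpose_apply, Nat.add_comm]
        rw [hcol]
        exact pow_mulVec_mem _ _ _
      have hfin1 : Module.finrank ℝ (Submodule.span ℝ (Set.range Hᵀ)) = K := by
        exact (Matrix.rank_eq_finrank_span_cols H).symm.trans h1
      have hfinV : Module.finrank ℝ V = K := by
        have hle1 : K ≤ Module.finrank ℝ V := by
          have hmono := Submodule.finrank_mono hHle
          omega
        have hle2 : Module.finrank ℝ V ≤ K := by
          have := Submodule.finrank_le V
          rwa [Module.finrank_fintype_fun_eq_card, Fintype.card_fin] at this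
        omega
      apply Submodule.eq_top_of_finrank_eq
      rw [hfinV, Module.finrank_fintype_fun_eq_card, Fintype.card_fin]
    have hsurj : Function.Surjective C.mulVecLin := by
      rw [← LinearMap.range_eq_top, Matrix.range_mulVecLin]
      have : Set.range C.col = Set.range fun j : Fin K => compS K a ^ (j : ℕ) *ᵥ w0 := by
        congr 1
      rw [this, ← hV, hVtop]
    have hinj : Function.Injective C.mulVecLin :=
      LinearMap.injective_iff_surjective.mpr hsurj
    rw [Matrix.isUnit_iff_isUnit_det, isUnit_iff_ne_zero]
    intro hdet
    obtain ⟨v, hv, hCv⟩ := (Matrix.exists_mulVec_eq_zero_iff).mpr hdet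
    apply hv
    apply hinj
    rw [Matrix.mulVecLin_apply, hCv, map_zero]
  · -- the response
    intro t ht
    set w0 : Fin K → ℝ := fun i : Fin K => u (i : ℕ) with hw0
    have key : ∀ (i s : ℕ), i < K → s ≤ N →
        ((Lrow K * compS K a ^ (i + s)) *ᵥ w0) 0 = u (s + i) := by
      intro i s hi hs
      rw [pow_add, ← Matrix.mul_assoc, ← Matrix.mulVec_mulVec,
        compS_pow a hrec s hs, Lrow_pick a i hi]
    rcases le_or_gt t N with h | h
    · have := key 0 t hK h
      simpa using this.symm
    · have hi : t - N < K := by omega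
      have := key (t - N) N hi le_rfl
      have he : t - N + N = t := by omega
      rw [he] at this
      rw [this]
      congr 1
      omega
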